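/- Let d ≥ 1 and R > 0, let μ be a probability measure on ℝᵈ absolutely continuous with respect to Lebesgue measure and satisfying μ({y : ‖y‖ ≥ R}) = 1, and let σ ∈ [0,1]. If there exists v₁ ∈ ℝᵈ with μ({y : ‖y + v₁‖² ≥ R² + ‖v₁‖²}) ≤ σ, then there exists v ∈ ℝᵈ with μ({y : ‖y + v‖² ≥ R² + ‖v‖²}) = σ. -/

import Mathlib

open MeasureTheory Filter Topology

/-- Exact attainment step in the existence proof of PrSBC: if some relative velocity makes the
safety event have probability at most `σ`, then some relative velocity attains probability
exactly `σ`. -/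
theorem stmt_8 (d : ℕ) (hd : 1 ≤ d) (R : ℝ) (hR : 0 < R)
    (μ : Measure (EuclideanSpace ℝ (Fin d))) [IsProbabilityMeasure μ]
    (hac : μ ≪ volume) (hμ : μ {y | R ≤ ‖y‖} = 1)
    (σ : ℝ) (hσ : σ ∈ Set.Icc (0 : ℝ) 1)
    (v₁ : EuclideanSpace ℝ (Fin d))
    (h₁ : μ {y | R ^ 2 + ‖v₁‖ ^ 2 ≤ ‖y + v₁‖ ^ 2} ≤ ENNReal.ofReal σ) :
    ∃ v : EuclideanSpace ℝ (Fin d),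
      μ {y | R ^ 2 + ‖v‖ ^ 2 ≤ ‖y + v‖ ^ 2} = ENNReal.ofReal σ := by
  haveI : Nontrivial (EuclideanSpace ℝ (Fin d)) := by
    have : 0 < Module.finrank ℝ (EuclideanSpace ℝ (Fin d)) := by
      simpa [finrank_euclideanSpace_fin] using Nat.lt_of_lt_of_le Nat.zero_lt_one hd
    exact Module.nontrivial_of_finrank_pos this
  set S : ℝ → Set (EuclideanSpace ℝ (Fin d)) :=
    fun t => {y | R ^ 2 + ‖t • v₁‖ ^ 2 ≤ ‖y + t • v₁‖ ^ 2} with hS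
  have hSm : ∀ t, MeasurableSet (S t) := by
    intro t
    exact measurableSet_le measurable_const
      (((continuous_id.add continuous_const).norm.pow 2).measurable)
  -- continuity of t ↦ μ (S t)
  have hFcont : Continuous fun t => μ (S t) := by
    rw [continuous_iff_continuousAt]
    intro t₀
    have key : Tendsto (fun t => ∫⁻ y, (S t).indicator (fun _ => (1 : ENNReal)) y ∂μ)
        (𝓝 t₀) (𝓝 (∫⁻ y, (S t₀).indicator (fun _ => (1 : ENNReal)) y ∂μ)) := by
      apply tendsto_lintegral_filter_of_dominated_convergence (fun _ => (1 : ENNReal))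
      · exact Eventually.of_forall fun t => (measurable_one.indicator (hSm t))
      · exact Eventually.of_forall fun t => ae_of_all _ fun y => by
          by_cases h : y ∈ S t <;> simp [Set.indicator_apply, h]
      · simp
      · -- a.e. pointwise convergence
        have hnull : μ {y : EuclideanSpace ℝ (Fin d) |
            ‖y + t₀ • v₁‖ ^ 2 = R ^ 2 + ‖t₀ • v₁‖ ^ 2} = 0 := by
          set r : ℝ := Real.sqrt (R ^ 2 + ‖t₀ • v₁‖ ^ 2) with hr
          have hsub : {y : EuclideanSpace ℝ (Fin d) |
              ‖y + t₀ • v₁‖ ^ 2 = R ^ 2 + ‖t₀ • v₁‖ ^ 2} ⊆ Metric.sphere (-(t₀ • v₁)) r := by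
            intro y hy
            simp only [Set.mem_setOf_eq] at hy
            have : ‖y + t₀ • v₁‖ = r := by
              rw [hr, ← hy, Real.sqrt_sq (norm_nonneg _)]
            simpa [Metric.mem_sphere, dist_eq_norm, sub_neg_eq_add] using this
          have hvol : volume (Metric.sphere (-(t₀ • v₁)) r) = 0 :=
            Measure.addHaar_sphere (μ := volume) _ r
          exact measure_mono_null hsub (hac hvol)
        have hae : ∀ᵐ y ∂μ, ‖y + t₀ • v₁‖ ^ 2 ≠ R ^ 2 + ‖t₀ • v₁‖ ^ 2 := by
          rw [ae_iff]
          simp only [ne_eq, not_not]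
          exact hnull
        filter_upwards [hae] with y hy'
        have hφ : Continuous fun t : ℝ => ‖y + t • v₁‖ ^ 2 - (R ^ 2 + ‖t • v₁‖ ^ 2) := by
          fun_prop
        rcases lt_or_gt_of_ne (sub_ne_zero.mpr hy') with hneg | hpos
        · have hev : ∀ᶠ t in 𝓝 t₀, ‖y + t • v₁‖ ^ 2 - (R ^ 2 + ‖t • v₁‖ ^ 2) < 0 :=
            (hφ.continuousAt (x := t₀)).eventually_lt continuousAt_const hneg
          have h0 : (S t₀).indicator (fun _ => (1 : ENNReal)) y = 0 := by
            apply Set.indicator_of_notMem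
            simp only [hS, Set.mem_setOf_eq, not_le]
            linarith
          rw [h0]
          apply tendsto_const_nhds.congr'
          filter_upwards [hev] with t ht
          symm
          apply Set.indicator_of_notMem
          simp only [hS, Set.mem_setOf_eq, not_le]
          linarith
        · have hev : ∀ᶠ t in 𝓝 t₀, 0 < ‖y + t • v₁‖ ^ 2 - (R ^ 2 + ‖t • v₁‖ ^ 2) :=
            (continuousAt_const (x := t₀)).eventually_lt (hφ.continuousAt) hpos
          have h0 : (S t₀).indicator (fun _ => (1 : ENNReal)) y = 1 := by
            apply Set.indicator_of_mem
            simp only [hS, Set.mem_setOf_eq]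
            linarith
          rw [h0]
          apply tendsto_const_nhds.congr'
          filter_upwards [hev] with t ht
          symm
          apply Set.indicator_of_mem
          simp only [hS, Set.mem_setOf_eq]
          linarith
    have heq : (fun t => μ (S t)) = fun t => ∫⁻ y, (S t).indicator (fun _ => (1 : ENNReal)) y ∂μ :=
      funext fun t => (lintegral_indicator_one (hSm t)).symm
    rw [heq]
    exact key
  -- real-valued function
  set f : ℝ → ℝ := fun t => (μ (S t)).toReal with hf
  have hfcont : Continuous f := by
    rw [continuous_iff_continuousAt]
    intro t₀
    exact (ENNReal.tendsto_toReal (measure_ne_top μ _)).comp (hFcont.tendsto t₀)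
  have hf0 : f 0 = 1 := by
    have : S 0 = {y | R ≤ ‖y‖} := by
      ext y
      simp only [hS, Set.mem_setOf_eq, zero_smul, add_zero, norm_zero]
      constructor
      · intro h
        have h' : R ^ 2 ≤ ‖y‖ ^ 2 := by simpa using h
        exact le_of_pow_le_pow_left₀ two_ne_zero (norm_nonneg y) h'
      · intro h
        simpa using pow_le_pow_left₀ hR.le h 2
    simp [hf, this, hμ]
  have hf1 : f 1 ≤ σ := by
    have hS1 : S 1 = {y | R ^ 2 + ‖v₁‖ ^ 2 ≤ ‖y + v₁‖ ^ 2} := by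
      simp [hS, one_smul]
    rw [hf]
    simp only [hS1]
    exact ENNReal.toReal_le_of_le_ofReal hσ.1 h₁
  have hmem : σ ∈ Set.Icc (f 1) (f 0) := ⟨hf1, hf0 ▸ hσ.2⟩
  obtain ⟨t, _, hft⟩ := intermediate_value_Icc' zero_le_one hfcont.continuousOn hmem
  refine ⟨t • v₁, ?_⟩
  have : μ (S t) = ENNReal.ofReal σ := by
    rw [← hft, hf, ENNReal.ofReal_toReal (measure_ne_top μ _)]
  simpa [hS] using this
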